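/- arXiv:1106.4377 — 3 statements merged into one kernel-verified Lean document; each statement's English description precedes it below -/
import Mathlib

section
/- Let f(z) = z + Σ_{n≥2} aₙ zⁿ be normalized analytic on 𝔻 with Taylor coefficients satisfying Σ_{n≥2} n(n−1)|aₙ| ≤ 1/3. Then f ∈ UCV. -/
open Complex Metric Set

noncomputable section

/-- The open unit disk in ℂ. -/
def unitDisk : Set ℂ := Metric.ball (0 : ℂ) 1

/-- `f` is normalized analytic on the unit disk: analytic there, `f 0 = 0`, `f' 0 = 1`. -/
def IsNormalized (f : ℂ → ℂ) : Prop :=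
  DifferentiableOn ℂ f unitDisk ∧ f 0 = 0 ∧ deriv f 0 = 1

/-- Uniformly starlike functions (two-variable characterization). -/
def IsUST (f : ℂ → ℂ) : Prop :=
  IsNormalized f ∧ Set.InjOn f unitDisk ∧
    ∀ z ∈ unitDisk, ∀ ζ ∈ unitDisk, z ≠ ζ →
      0 ≤ ((z - ζ) * deriv f z / (f z - f ζ)).re

/-- Uniformly convex functions (one-variable characterization). -/
def IsUCV (f : ℂ → ℂ) : Prop :=
  IsNormalized f ∧ Set.InjOn f unitDisk ∧
    ∀ z ∈ unitDisk,
      ‖z * deriv (deriv f) z / deriv f z‖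
        < (1 + z * deriv (deriv f) z / deriv f z).re

/-- Parabolic starlike functions. -/
def IsSP (f : ℂ → ℂ) : Prop :=
  IsNormalized f ∧
    ∀ z ∈ unitDisk, z ≠ 0 →
      ‖z * deriv f z / f z - 1‖ < (z * deriv f z / f z).re

/-- The `n`-th Taylor coefficient of `f` at the origin. -/
def taylorCoeff (f : ℂ → ℂ) (n : ℕ) : ℂ :=
  iteratedDeriv n f 0 / (n.factorial : ℂ)

lemma clm_norm_eq (L : ℂ →L[ℂ] ℂ) : ‖L‖ = ‖L 1‖ := by
  refine le_antisymm (L.opNorm_le_bound (norm_nonneg _) fun z => ?_)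
    (by simpa using L.le_opNorm 1)
  have : L z = z • L 1 := by rw [← map_smul]; simp
  rw [this, norm_smul]; ring_nf; rfl

lemma coeff_eq_iteratedDeriv {g : ℂ → ℂ} {p : FormalMultilinearSeries ℂ ℂ ℂ} {r : ENNReal}
    (hg : HasFPowerSeriesOnBall g p 0 r) (n : ℕ) :
    p.coeff n = iteratedDeriv n g 0 / n.factorial := by
  have h := hg.factorial_smul (1 : ℂ) n
  have hc : p n (fun _ => (1:ℂ)) = p.coeff n := rfl
  rw [iteratedDeriv_eq_iteratedFDeriv, ← h, hc, nsmul_eq_mul]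
  rw [mul_comm, mul_div_assoc, div_self, mul_one]
  exact_mod_cast Nat.cast_ne_zero.mpr n.factorial_ne_zero

lemma rep_hasSum {g : ℂ → ℂ} (hg : DifferentiableOn ℂ g (Metric.ball (0:ℂ) 1))
    {z : ℂ} (hz : ‖z‖ < 1) :
    HasSum (fun n => (iteratedDeriv n g 0 / (n.factorial : ℂ)) * z ^ n) (g z) := by
  set R : NNReal := ⟨(‖z‖+1)/2, by positivity⟩ with hR
  have hRr : (R : ℝ) = (‖z‖+1)/2 := rfl
  have hRlt : (R : ℝ) < 1 := by rw [hRr]; linarith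
  have hsub : Metric.closedBall (0:ℂ) R ⊆ Metric.ball (0:ℂ) 1 := by
    intro w hw
    rw [Metric.mem_closedBall] at hw
    rw [Metric.mem_ball]
    exact lt_of_le_of_lt hw hRlt
  have hRpos : 0 < R := by
    rw [← NNReal.coe_lt_coe, hRr]; positivity
  have h := (hg.mono hsub).hasFPowerSeriesOnBall hRpos
  have hz2 : z ∈ Metric.eball (0:ℂ) R := by
    rw [Metric.mem_eball, edist_dist, dist_zero_right, ← ENNReal.ofReal_coe_nnreal]
    rw [ENNReal.ofReal_lt_ofReal_iff (by positivity)]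
    rw [hRr]; linarith
  have hs := h.hasSum hz2
  simp only [zero_add] at hs
  convert hs using 2 with n
  · rfl
  rw [FormalMultilinearSeries.apply_eq_pow_smul_coeff, coeff_eq_iteratedDeriv h, smul_eq_mul,
    mul_comm]

lemma factC1 (n : ℕ) : (((n+1).factorial : ℂ)) ≠ 0 := Nat.cast_ne_zero.mpr (n+1).factorial_ne_zero
lemma factC2 (n : ℕ) : (((n+2).factorial : ℂ)) ≠ 0 := Nat.cast_ne_zero.mpr (n+2).factorial_ne_zero

lemma coeffD1 (f : ℂ → ℂ) (n : ℕ) :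
    iteratedDeriv (n+1) (deriv f) 0 / (((n+1).factorial : ℕ) : ℂ)
      = ((n:ℂ)+2) * (iteratedDeriv (n+2) f 0 / (((n+2).factorial : ℕ) : ℂ)) := by
  rw [← iteratedDeriv_succ', mul_div_assoc', div_eq_div_iff (factC1 n) (factC2 n)]
  have : (((n+2).factorial : ℕ) : ℂ) = ((n:ℂ)+2) * (((n+1).factorial : ℕ) : ℂ) := by
    rw [show (n+2).factorial = (n+2) * (n+1).factorial from rfl]; push_cast; ring
  rw [this]; ring

lemma coeffD2 (f : ℂ → ℂ) (n : ℕ) :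
    iteratedDeriv n (deriv (deriv f)) 0 / ((n.factorial : ℕ) : ℂ)
      = ((n:ℂ)+2) * ((n:ℂ)+1) * (iteratedDeriv (n+2) f 0 / (((n+2).factorial : ℕ) : ℂ)) := by
  have hn : ((n.factorial : ℕ) : ℂ) ≠ 0 := Nat.cast_ne_zero.mpr n.factorial_ne_zero
  rw [← iteratedDeriv_succ', ← iteratedDeriv_succ', mul_div_assoc', div_eq_div_iff hn (factC2 n)]
  have : (((n+2).factorial : ℕ) : ℂ) = ((n:ℂ)+2) * (((n:ℂ)+1) * ((n.factorial : ℕ) : ℂ)) := by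
    rw [show (n+2).factorial = (n+2) * ((n+1) * n.factorial) from rfl]; push_cast; ring
  rw [this]; ring


lemma abs_mul_coeff (n : ℕ) :
    ‖((n:ℂ)+2)*((n:ℂ)+1)‖ = ((n:ℝ)+2)*((n:ℝ)+1) := by
  rw [show ((n:ℂ)+2)*((n:ℂ)+1) = ((((n:ℝ)+2)*((n:ℝ)+1) : ℝ) : ℂ) by push_cast; ring,
    Complex.norm_of_nonneg (by positivity)]

lemma abs_coeff1 (n : ℕ) : ‖(n:ℂ)+2‖ = ((n:ℝ)+2) := by
  rw [show ((n:ℂ)+2) = ((((n:ℝ)+2) : ℝ) : ℂ) by push_cast; ring,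
    Complex.norm_of_nonneg (by positivity)]

set_option maxHeartbeats 1000000

/-- Goodman's coefficient sufficient condition for uniform convexity:
Σ_{n≥2} n(n−1)|aₙ| ≤ 1/3 implies f ∈ UCV. -/
theorem ucv_of_coeff_sum (f : ℂ → ℂ) (hf : IsNormalized f)
    (hsum : Summable (fun n : ℕ =>
      ((n : ℝ) + 2) * ((n : ℝ) + 1) * ‖taylorCoeff f (n + 2)‖))
    (hbd : ∑' n : ℕ,
      ((n : ℝ) + 2) * ((n : ℝ) + 1) * ‖taylorCoeff f (n + 2)‖ ≤ 1 / 3) :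
    IsUCV f := by
  obtain ⟨hdiff, hf0, hf1⟩ := hf
  set S : ℝ := ∑' n : ℕ, ((n:ℝ)+2)*((n:ℝ)+1)*‖taylorCoeff f (n+2)‖ with hSdef
  have hS0 : 0 ≤ S := tsum_nonneg (fun n => by positivity)
  have hSsum : HasSum (fun n : ℕ => ((n:ℝ)+2)*((n:ℝ)+1)*‖taylorCoeff f (n+2)‖) S :=
    hsum.hasSum
  have hopen : IsOpen unitDisk := Metric.isOpen_ball
  have hA : AnalyticOnNhd ℂ f unitDisk := hdiff.analyticOnNhd hopen
  have hd1 : DifferentiableOn ℂ (deriv f) unitDisk := hA.deriv.differentiableOn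
  have hd2 : DifferentiableOn ℂ (deriv (deriv f)) unitDisk := hA.deriv.deriv.differentiableOn
  -- bound on second derivative
  have key2 : ∀ z ∈ unitDisk, ‖deriv (deriv f) z‖ ≤ S := by
    intro z hz
    have hz1 : ‖z‖ < 1 := by simpa [unitDisk, Metric.mem_ball, dist_zero_right] using hz
    have hs2 := rep_hasSum hd2 hz1
    have hb : ∀ n : ℕ,
        ‖(iteratedDeriv n (deriv (deriv f)) 0 / (n.factorial : ℂ)) * z^n‖
          ≤ ((n:ℝ)+2)*((n:ℝ)+1)*‖taylorCoeff f (n+2)‖ := by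
      intro n
      rw [norm_mul, norm_pow, coeffD2, norm_mul, abs_mul_coeff]
      have hzn : ‖z‖^n ≤ 1 := pow_le_one₀ (norm_nonneg z) hz1.le
      calc ((n:ℝ)+2)*((n:ℝ)+1) * ‖taylorCoeff f (n+2)‖ * ‖z‖^n
          ≤ ((n:ℝ)+2)*((n:ℝ)+1) * ‖taylorCoeff f (n+2)‖ * 1 :=
            mul_le_mul_of_nonneg_left hzn (by positivity)
        _ = ((n:ℝ)+2)*((n:ℝ)+1) * ‖taylorCoeff f (n+2)‖ := mul_one _
    have := tsum_of_norm_bounded hSsum hb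
    rwa [hs2.tsum_eq] at this
  -- bound on first derivative
  have key1 : ∀ z ∈ unitDisk, ‖deriv f z - 1‖ ≤ ‖z‖ * S := by
    intro z hz
    have hz1 : ‖z‖ < 1 := by simpa [unitDisk, Metric.mem_ball, dist_zero_right] using hz
    have hs1 := rep_hasSum hd1 hz1
    have h0 : iteratedDeriv 0 (deriv f) 0 / ((Nat.factorial 0 : ℕ) : ℂ) * z^0 = 1 := by
      simp [iteratedDeriv_zero, hf1]
    have hshift : HasSum
        (fun n => (iteratedDeriv (n+1) (deriv f) 0 / (((n+1).factorial : ℕ) : ℂ)) * z^(n+1))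
        (deriv f z - 1) := by
      have hshift0 := (hasSum_nat_add_iff' (f := fun n =>
        (iteratedDeriv n (deriv f) 0 / ((n.factorial : ℕ) : ℂ)) * z^n) 1).mpr hs1
      simpa [Finset.sum_range_one, h0, hf1] using hshift0
    have hb : ∀ n : ℕ,
        ‖(iteratedDeriv (n+1) (deriv f) 0 / (((n+1).factorial : ℕ) : ℂ)) * z^(n+1)‖
          ≤ ‖z‖ * (((n:ℝ)+2)*((n:ℝ)+1)*‖taylorCoeff f (n+2)‖) := by
      intro n
      rw [norm_mul, norm_pow, coeffD1, norm_mul, abs_coeff1]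
      have h1 : ‖z‖^(n+1) ≤ ‖z‖ := by
        calc ‖z‖^(n+1) ≤ ‖z‖^1 := pow_le_pow_of_le_one (norm_nonneg z) hz1.le (by omega)
          _ = ‖z‖ := pow_one _
      have h2 : ((n:ℝ)+2) ≤ ((n:ℝ)+2)*((n:ℝ)+1) := by nlinarith [Nat.cast_nonneg (α := ℝ) n]
      have ha0 : 0 ≤ ‖taylorCoeff f (n+2)‖ := norm_nonneg _
      calc ((n:ℝ)+2) * ‖taylorCoeff f (n+2)‖ * ‖z‖^(n+1)
          ≤ ((n:ℝ)+2) * ‖taylorCoeff f (n+2)‖ * ‖z‖ :=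
            mul_le_mul_of_nonneg_left h1 (by positivity)
        _ ≤ (((n:ℝ)+2)*((n:ℝ)+1)) * ‖taylorCoeff f (n+2)‖ * ‖z‖ :=
            mul_le_mul_of_nonneg_right (mul_le_mul_of_nonneg_right h2 ha0) (norm_nonneg z)
        _ = ‖z‖ * (((n:ℝ)+2)*((n:ℝ)+1)*‖taylorCoeff f (n+2)‖) := by ring
    have := tsum_of_norm_bounded (hSsum.mul_left ‖z‖) hb
    rwa [hshift.tsum_eq] at this
  refine ⟨⟨hdiff, hf0, hf1⟩, ?_, ?_⟩
  · -- injectivity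
    have hconv : Convex ℝ unitDisk := convex_ball _ _
    have hg : DifferentiableOn ℂ (fun w => f w - w) unitDisk :=
      hdiff.sub differentiable_id.differentiableOn
    have hbound : ∀ x ∈ unitDisk, ‖fderivWithin ℂ (fun w => f w - w) unitDisk x‖ ≤ 1/3 := by
      intro x hx
      have hx1 : ‖x‖ < 1 := by simpa [unitDisk, Metric.mem_ball, dist_zero_right] using hx
      have hxd : DifferentiableAt ℂ f x := hdiff.differentiableAt (hopen.mem_nhds hx)
      rw [fderivWithin_of_isOpen hopen hx, clm_norm_eq, fderiv_apply_one_eq_deriv]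
      have hder : deriv (fun w => f w - w) x = deriv f x - 1 := by
        rw [deriv_fun_sub hxd differentiableAt_fun_id]
        simp
      rw [hder]
      have hk := key1 x hx
      nlinarith [norm_nonneg x]
    intro x hx y hy hxy
    have key := hconv.norm_image_sub_le_of_norm_fderivWithin_le hg hbound hx hy
    have e : (fun w => f w - w) y - (fun w => f w - w) x = x - y := by
      simp only
      rw [hxy]
      ring
    rw [e, norm_sub_rev y x] at key
    have h0 : ‖x - y‖ = 0 := le_antisymm (by linarith) (norm_nonneg _)
    exact sub_eq_zero.mp (norm_eq_zero.mp h0)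
  · -- the UCV inequality
    intro z hz
    have hz1 : ‖z‖ < 1 := by simpa [unitDisk, Metric.mem_ball, dist_zero_right] using hz
    have h1 := key1 z hz
    have h2 := key2 z hz
    have htS : ‖z‖ * S < 1/3 := by
      rcases eq_or_lt_of_le hS0 with h|h
      · rw [← h, mul_zero]; norm_num
      · nlinarith
    have tri := norm_sub_le (deriv f z) (deriv f z - 1)
    rw [show deriv f z - (deriv f z - 1) = 1 by ring, norm_one] at tri
    have hflow : (2:ℝ)/3 < ‖deriv f z‖ := by linarith
    set w := z * deriv (deriv f) z / deriv f z with hw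
    have habsw : ‖w‖ < 1/2 := by
      rw [hw, norm_div, norm_mul]
      have e3 : ‖deriv f z‖ = ‖deriv f z‖ := rfl
      rw [div_lt_iff₀ (by rw [e3]; linarith)]
      have e1 : ‖z‖ = ‖z‖ := rfl
      have e2 : ‖deriv (deriv f) z‖ = ‖deriv (deriv f) z‖ :=
        rfl
      rw [e1, e2, e3]
      nlinarith [norm_nonneg z, norm_nonneg (deriv (deriv f) z),
        mul_le_mul_of_nonneg_left h2 (norm_nonneg z)]
    have hre : |w.re| ≤ ‖w‖ := Complex.abs_re_le_norm w
    have hre1 := (abs_le.mp hre).1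
    have e4 : (1 + w).re = 1 + w.re := by simp [Complex.add_re, Complex.one_re]
    rw [e4]
    linarith
end
end

section
/- Let a > 1/2 and define R_a = a − 1/2 if 1/2 < a ≤ 3/2, and R_a = √(2a − 2) if a ≥ 3/2. If f is normalized analytic on 𝔻 and |1 + z·f''(z)/f'(z) − a| < R_a for all z ∈ 𝔻, then f ∈ UCV. -/
open Complex Metric Set

noncomputable section

open Filter Topology intervalIntegral MeasureTheory

/-- Compatibility: the complex absolute value as the norm. -/
def Complex.abs : AbsoluteValue ℂ ℝ := NormedField.toAbsoluteValue ℂ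

@[simp] theorem Complex.abs_apply (z : ℂ) : Complex.abs z = ‖z‖ := rfl

theorem Complex.norm_eq_abs (z : ℂ) : ‖z‖ = Complex.abs z := rfl

theorem Complex.abs_ofReal (r : ℝ) : Complex.abs (r : ℂ) = |r| := by
  rw [Complex.abs_apply]; simp

theorem Complex.sq_abs (z : ℂ) : Complex.abs z ^ 2 = Complex.normSq z := Complex.sq_norm z

theorem Complex.abs_natCast (n : ℕ) : Complex.abs (n : ℂ) = n := by
  rw [Complex.abs_apply]; simp

theorem Complex.continuous_abs : Continuous Complex.abs := continuous_norm

theorem Complex.abs_im_le_abs (z : ℂ) : |z.im| ≤ Complex.abs z := Complex.abs_im_le_norm z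

/-! ### Auxiliary lemmas -/

lemma ucv_pointwise (a : ℝ) (ha : 1/2 < a) (w : ℂ)
    (hw : Complex.abs (1 + w - (a:ℂ)) < if a ≤ 3/2 then a - 1/2 else Real.sqrt (2*a-2)) :
    Complex.abs w < (1 + w).re := by
  set R : ℝ := if a ≤ 3/2 then a - 1/2 else Real.sqrt (2*a-2) with hRdef
  set x := w.re
  set y := w.im
  have hsq : (1 + x - a)^2 + y^2 < R^2 := by
    have h2 : Complex.abs (1 + w - (a:ℂ)) ^ 2 < R ^ 2 :=
      pow_lt_pow_left₀ hw (AbsoluteValue.nonneg _ _) (by norm_num)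
    rwa [Complex.sq_abs, Complex.normSq_apply, Complex.sub_re, Complex.add_re,
      Complex.one_re, Complex.ofReal_re, Complex.sub_im, Complex.add_im, Complex.one_im,
      Complex.ofReal_im, sub_zero, zero_add, ← pow_two, ← pow_two] at h2
  have hy : y^2 < 1 + 2*x := by
    by_cases hc : a ≤ 3/2
    · rw [if_pos hc] at hRdef
      have hRpos : (0:ℝ) < R := by rw [hRdef]; linarith
      have hx : -(1/2 : ℝ) < x := by nlinarith [sq_nonneg y]
      nlinarith [sq_nonneg y]
    · push_neg at hc
      rw [if_neg (not_le.2 hc)] at hRdef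
      have hR2 : R^2 = 2*a - 2 := by rw [hRdef]; rw [Real.sq_sqrt]; linarith
      nlinarith [sq_nonneg (x - (a-1) + 1)]
  have hx2 : (0:ℝ) < 1 + x := by nlinarith [sq_nonneg y]
  have habs : Complex.abs w ^ 2 < (1 + x)^2 := by
    rw [Complex.sq_abs, Complex.normSq_apply, ← pow_two, ← pow_two]; nlinarith
  have := lt_of_pow_lt_pow_left₀ 2 hx2.le habs
  simpa [Complex.add_re] using this

lemma deriv_ne_zero_of_bound {g : ℂ → ℂ} (hg : AnalyticOnNhd ℂ g unitDisk)
    (hg0 : g 0 = 1) (K : ℝ)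
    (hb : ∀ z ∈ unitDisk, g z ≠ 0 → Complex.abs (z * deriv g z / g z) ≤ K)
    {z₀ : ℂ} (hz₀ : z₀ ∈ unitDisk) : g z₀ ≠ 0 := by
  intro hgz
  have h0U : (0:ℂ) ∈ unitDisk := mem_ball_self one_pos
  have hK0 : 0 ≤ K := by
    have := hb 0 h0U (by rw [hg0]; exact one_ne_zero)
    exact le_trans (AbsoluteValue.nonneg _ _) this
  have hz₀0 : z₀ ≠ 0 := by
    rintro rfl; rw [hgz] at hg0; exact one_ne_zero hg0.symm
  have hA : AnalyticAt ℂ g z₀ := hg z₀ hz₀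
  have hnotev : ¬ ∀ᶠ z in 𝓝 z₀, g z = 0 := by
    intro hev
    have h := hg.eqOn_zero_of_preconnected_of_eventuallyEq_zero
      (convex_ball (0:ℂ) 1).isPreconnected hz₀ hev h0U
    rw [hg0] at h
    exact one_ne_zero h
  have horder : analyticOrderAt g z₀ ≠ ⊤ := fun hh => hnotev (analyticOrderAt_eq_top.mp hh)
  obtain ⟨m, hm⟩ := ENat.ne_top_iff_exists.mp horder
  obtain ⟨G, hGa, hG0, hGeq⟩ := (hA.analyticOrderAt_eq_natCast (n := m)).mp hm.symm
  have hm0 : m ≠ 0 := by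
    rintro rfl
    apply hG0
    have := hGeq.self_of_nhds
    simpa [hgz] using this.symm
  obtain ⟨k, rfl⟩ : ∃ k, m = k + 1 :=
    ⟨m - 1, (Nat.succ_pred_eq_of_pos (Nat.pos_of_ne_zero hm0)).symm⟩
  obtain ⟨s, hs_mem, hs⟩ := hGa.eventually_analyticAt.exists_mem
  obtain ⟨t, hts, ht_open, htz⟩ := _root_.mem_nhds_iff.mp hs_mem
  have hGt : AnalyticOnNhd ℂ G t := fun y hy => hs y (hts hy)
  have hdGcont : ContinuousAt (deriv G) z₀ := (hGt.deriv z₀ htz).continuousAt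
  have hGcont : ContinuousAt G z₀ := hGa.continuousAt
  have hGne : ∀ᶠ z in 𝓝 z₀, G z ≠ 0 := hGcont.eventually_ne hG0
  have hGdiff : ∀ᶠ z in 𝓝 z₀, DifferentiableAt ℂ G z :=
    hGa.eventually_analyticAt.mono fun y hy => hy.differentiableAt
  have hderiv_eq : ∀ᶠ z in 𝓝 z₀, deriv g z =
      ((k:ℂ)+1) * (z - z₀) ^ k * G z + (z - z₀) ^ (k+1) * deriv G z := by
    have hGeq' : g =ᶠ[nhds z₀] (fun w => (w - z₀) ^ (k+1) • G w) := hGeq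
    filter_upwards [hGeq'.deriv, hGdiff] with z h1 h2
    rw [h1]
    have hpow : HasDerivAt (fun w : ℂ => (w - z₀) ^ (k+1)) (((k:ℂ)+1) * (z - z₀) ^ k) z := by
      have := ((hasDerivAt_id z).sub_const z₀).pow (k+1)
      have h' : HasDerivAt ((fun x : ℂ => x - z₀) ^ (k+1)) (((k:ℂ)+1) * (z - z₀) ^ k) z := by
        simpa using this
      exact h'
    have hmul := hpow.mul h2.hasDerivAt
    simp only [smul_eq_mul]
    exact hmul.deriv
  set C : ℝ := Complex.abs (z₀ * deriv G z₀ / G z₀) + 1 with hC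
  have hCev : ∀ᶠ z in 𝓝 z₀, Complex.abs (z * deriv G z / G z) ≤ C := by
    have hcont : ContinuousAt (fun z => Complex.abs (z * deriv G z / G z)) z₀ :=
      Complex.continuous_abs.continuousAt.comp
        ((continuousAt_id.mul hdGcont).div hGcont hG0)
    exact hcont.eventually_le_const (by simp [hC])
  have hC1 : 1 ≤ C := by
    rw [hC]
    linarith [AbsoluteValue.nonneg Complex.abs (z₀ * deriv G z₀ / G z₀)]
  have hUev : ∀ᶠ z in 𝓝 z₀, z ∈ unitDisk := Metric.isOpen_ball.mem_nhds hz₀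
  have haz0 : 0 < Complex.abs z₀ := by simpa using hz₀0
  have habsev : ∀ᶠ z in 𝓝 z₀, Complex.abs z₀ / 2 ≤ Complex.abs z := by
    apply Complex.continuous_abs.continuousAt.eventually_const_le
    linarith
  have hT : Tendsto (fun z : ℂ => (Complex.abs (z - z₀))⁻¹) (𝓝[≠] z₀) atTop := by
    apply tendsto_inv_nhdsGT_zero.comp
    apply tendsto_nhdsWithin_of_tendsto_nhds_of_eventually_within
    · have hco : ContinuousAt (fun z : ℂ => Complex.abs (z - z₀)) z₀ :=
        (Complex.continuous_abs.comp (continuous_id.sub continuous_const)).continuousAt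
      rw [ContinuousAt] at hco
      exact (by simpa using hco : Tendsto (fun z : ℂ => Complex.abs (z - z₀)) (𝓝 z₀)
        (𝓝 0)).mono_left nhdsWithin_le_nhds
    · filter_upwards [self_mem_nhdsWithin] with z hz
      simpa [sub_eq_zero] using hz
  have hbig : ∀ᶠ z in 𝓝[≠] z₀, (K + C + 1) * (2 / Complex.abs z₀) ≤ (Complex.abs (z - z₀))⁻¹ :=
    hT.eventually_ge_atTop _
  have hcomb := (hUev.and (hGeq.and (hderiv_eq.and (hCev.and (habsev.and
    hGne))))).filter_mono (nhdsWithin_le_nhds : 𝓝[≠] z₀ ≤ 𝓝 z₀)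
  obtain ⟨z, hzb, ⟨hzU, hzG, hzderiv, hzC, hzabs, hzGne⟩, hzz⟩ :=
    (hbig.and (hcomb.and eventually_mem_nhdsWithin)).exists
  have hzne : z ≠ z₀ := hzz
  have hzz0 : z - z₀ ≠ 0 := sub_ne_zero.2 hzne
  have hgzne : g z ≠ 0 := by
    rw [hzG, smul_eq_mul]
    exact mul_ne_zero (pow_ne_zero _ hzz0) hzGne
  have hKz := hb z hzU hgzne
  set X : ℂ := ((k:ℂ)+1) * z / (z - z₀) with hX
  set Y : ℂ := z * deriv G z / G z with hY
  have hratio : z * deriv g z / g z = X + Y := by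
    rw [hzG, smul_eq_mul, hzderiv, hX, hY]
    field_simp
    ring
  have habsX : Complex.abs X = ((k:ℝ)+1) * Complex.abs z * (Complex.abs (z - z₀))⁻¹ := by
    have hcast : ((k:ℂ)+1) = ((k+1:ℕ):ℂ) := by push_cast; ring
    rw [hX, map_div₀, map_mul, hcast, Complex.abs_natCast, div_eq_mul_inv]
    push_cast; ring
  have hXlb : K + C + 1 ≤ Complex.abs X := by
    rw [habsX]
    have h1 : (1:ℝ) ≤ (k:ℝ)+1 := by
      have := Nat.cast_nonneg (α := ℝ) k; linarith
    have h2 : (0:ℝ) ≤ (Complex.abs (z - z₀))⁻¹ := by positivity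
    have h3 : (0:ℝ) < Complex.abs z := lt_of_lt_of_le (by positivity) hzabs
    have key : (K + C + 1) ≤ Complex.abs z * (Complex.abs (z - z₀))⁻¹ := by
      have hm : (Complex.abs z₀ / 2) * ((K + C + 1) * (2 / Complex.abs z₀))
          ≤ Complex.abs z * (Complex.abs (z - z₀))⁻¹ :=
        mul_le_mul hzabs hzb (by positivity) h3.le
      calc K + C + 1 = (Complex.abs z₀ / 2) * ((K + C + 1) * (2 / Complex.abs z₀)) := by
            field_simp
        _ ≤ _ := hm
    nlinarith [mul_le_mul_of_nonneg_right h1 (mul_nonneg h3.le h2)]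
  have htri : Complex.abs X ≤ Complex.abs (X + Y) + Complex.abs Y := by
    have := Complex.abs.add_le (X + Y) (-Y)
    simpa using this
  rw [hratio] at hKz
  linarith

lemma schwarz_bound {q : ℂ → ℂ} (hq : DifferentiableOn ℂ q unitDisk) (hq0 : q 0 = 0)
    {c R : ℝ} (hcR : |c| < R)
    (hmem : ∀ z ∈ unitDisk, Complex.abs (q z - (c:ℂ)) < R)
    {z : ℂ} (hz : z ∈ unitDisk) :
    Complex.abs (q z) * (R - |c| * Complex.abs z) ≤ (R^2 - c^2) * Complex.abs z := by
  have hR : 0 < R := lt_of_le_of_lt (abs_nonneg c) hcR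
  have hc2 : c^2 < R^2 := by nlinarith [abs_nonneg c, _root_.sq_abs c]
  set den : ℂ → ℂ := fun w => (((R^2 - c^2 : ℝ)):ℂ) + (c:ℂ) * q w with hden_def
  have habsden : ∀ w ∈ unitDisk, R * (R - |c|) ≤ Complex.abs (den w) := by
    intro w hw
    have h1 : Complex.abs ((c:ℂ) * (q w - (c:ℂ))) ≤ |c| * R := by
      rw [map_mul, Complex.abs_ofReal]
      exact mul_le_mul_of_nonneg_left (hmem w hw).le (abs_nonneg c)
    have h2 : den w = (((R^2:ℝ)):ℂ) + (c:ℂ) * (q w - (c:ℂ)) := by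
      rw [hden_def]; push_cast; ring
    have h3 : Complex.abs ((((R^2:ℝ)):ℂ)) ≤ Complex.abs (den w) + |c| * R := by
      calc Complex.abs ((((R^2:ℝ)):ℂ))
          = Complex.abs (den w + -((c:ℂ) * (q w - (c:ℂ)))) := by rw [h2]; ring_nf
        _ ≤ Complex.abs (den w) + Complex.abs (-((c:ℂ) * (q w - (c:ℂ)))) :=
            Complex.abs.add_le _ _
        _ ≤ Complex.abs (den w) + |c| * R := by rw [map_neg_eq_map]; linarith
    rw [Complex.abs_ofReal, abs_of_pos (by positivity : (0:ℝ) < R^2)] at h3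
    nlinarith
  have hden_ne : ∀ w ∈ unitDisk, den w ≠ 0 := by
    intro w hw h0
    have := habsden w hw
    rw [h0, map_zero] at this
    nlinarith [abs_nonneg c]
  set ψ : ℂ → ℂ := fun w => (R:ℂ) * q w / den w with hψ_def
  have hψ0 : ψ 0 = 0 := by simp [hψ_def, hq0]
  have hψd : DifferentiableOn ℂ ψ unitDisk := by
    apply DifferentiableOn.div
    · exact (differentiableOn_const _).mul hq
    · exact (differentiableOn_const _).add ((differentiableOn_const _).mul hq)
    · exact hden_ne
  have hψmaps : MapsTo ψ unitDisk (ball (ψ 0) 1) := by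
    rw [hψ0]
    intro w hw
    simp only [mem_ball, dist_zero_right]
    rw [Complex.norm_eq_abs, hψ_def]
    have hdenpos : 0 < Complex.abs (den w) :=
      lt_of_lt_of_le (by nlinarith [abs_nonneg c]) (habsden w hw)
    rw [map_div₀, div_lt_one hdenpos]
    have hqc : ((q w).re - c)^2 + (q w).im^2 < R^2 := by
      have h2 : Complex.abs (q w - (c:ℂ)) ^ 2 < R ^ 2 :=
        pow_lt_pow_left₀ (hmem w hw) (AbsoluteValue.nonneg _ _) (by norm_num)
      rwa [Complex.sq_abs, Complex.normSq_apply, Complex.sub_re, Complex.sub_im,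
        Complex.ofReal_re, Complex.ofReal_im, sub_zero, ← pow_two, ← pow_two] at h2
    have key : Complex.abs ((R:ℂ) * q w) ^ 2 < Complex.abs (den w) ^ 2 := by
      rw [Complex.sq_abs, Complex.sq_abs, hden_def]
      simp only [Complex.normSq_apply, Complex.add_re, Complex.add_im, Complex.mul_re,
        Complex.mul_im, Complex.ofReal_re, Complex.ofReal_im]
      ring_nf
      nlinarith [mul_pos (sub_pos.2 hc2) (sub_pos.2 hqc)]
    exact lt_of_pow_lt_pow_left₀ 2 (AbsoluteValue.nonneg _ _) key
  have hschwarz : Complex.abs (ψ z) ≤ Complex.abs z := by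
    have hd' : DifferentiableOn ℂ ψ (ball (0:ℂ) 1) := hψd
    have hm' : MapsTo ψ (ball (0:ℂ) 1) (ball (ψ 0) 1) := hψmaps
    have := Complex.dist_le_div_mul_dist_of_mapsTo_ball hd' (hm'.mono_right ball_subset_closedBall) (hz : z ∈ ball (0:ℂ) 1)
    rw [hψ0, dist_zero_right, dist_zero_right, Complex.norm_eq_abs, Complex.norm_eq_abs] at this
    simpa using this
  have hrel : q z * ((R:ℂ) - (c:ℂ) * ψ z) = (((R^2 - c^2 : ℝ)):ℂ) * ψ z := by
    have h1 : ψ z * den z = (R:ℂ) * q z := by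
      rw [hψ_def]
      field_simp
      rw [mul_div_assoc, div_self (hden_ne z hz), mul_one]
    rw [hden_def] at h1
    linear_combination -h1
  have habsz1 : Complex.abs z < 1 := by simpa [unitDisk, mem_ball, dist_zero_right] using hz
  have hlow : R - |c| * Complex.abs z ≤ Complex.abs ((R:ℂ) - (c:ℂ) * ψ z) := by
    have h1 : Complex.abs ((c:ℂ) * ψ z) ≤ |c| * Complex.abs z := by
      rw [map_mul, Complex.abs_ofReal]
      exact mul_le_mul_of_nonneg_left hschwarz (abs_nonneg c)
    have h2 : Complex.abs ((R:ℂ)) ≤ Complex.abs ((R:ℂ) - (c:ℂ) * ψ z)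
        + Complex.abs ((c:ℂ) * ψ z) := by
      calc Complex.abs ((R:ℂ)) = Complex.abs (((R:ℂ) - (c:ℂ) * ψ z) + (c:ℂ) * ψ z) := by ring_nf
        _ ≤ _ := Complex.abs.add_le _ _
    rw [Complex.abs_ofReal, abs_of_pos hR] at h2
    linarith
  calc Complex.abs (q z) * (R - |c| * Complex.abs z)
      ≤ Complex.abs (q z) * Complex.abs ((R:ℂ) - (c:ℂ) * ψ z) :=
        mul_le_mul_of_nonneg_left hlow (AbsoluteValue.nonneg _ _)
    _ = Complex.abs (q z * ((R:ℂ) - (c:ℂ) * ψ z)) := (map_mul _ _ _).symm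
    _ = Complex.abs ((((R^2 - c^2 : ℝ)):ℂ) * ψ z) := by rw [hrel]
    _ = (R^2 - c^2) * Complex.abs (ψ z) := by
        rw [map_mul, Complex.abs_ofReal, abs_of_pos (by nlinarith)]
    _ ≤ (R^2 - c^2) * Complex.abs z := mul_le_mul_of_nonneg_left hschwarz (by nlinarith)

lemma deriv_eq_exp_integral {g : ℂ → ℂ} (hg : AnalyticOnNhd ℂ g unitDisk)
    (hgne : ∀ w ∈ unitDisk, g w ≠ 0) (hg0 : g 0 = 1) {z : ℂ} (hz : z ∈ unitDisk) :
    g z = Complex.exp (∫ t in (0:ℝ)..1, z * (deriv g ((t:ℂ)*z) / g ((t:ℂ)*z))) := by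
  set H : ℂ → ℂ := fun w => deriv g w / g w with hH_def
  set F : ℝ → ℂ := fun s => z * H ((s:ℂ)*z) with hF_def
  have habsz : Complex.abs z < 1 := by simpa [unitDisk, mem_ball, dist_zero_right] using hz
  set S : Set ℝ := {s : ℝ | (s:ℂ)*z ∈ unitDisk} with hS_def
  have hS_open : IsOpen S := by
    have : Continuous (fun s : ℝ => (s:ℂ)*z) := Complex.continuous_ofReal.mul continuous_const
    exact (Metric.isOpen_ball).preimage this
  have hS_mem : ∀ t : ℝ, t ∈ Icc (0:ℝ) 1 → t ∈ S := by
    intro t ht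
    simp only [hS_def, mem_setOf_eq, unitDisk, mem_ball, dist_zero_right, Complex.norm_eq_abs,
      map_mul, Complex.abs_ofReal]
    calc |t| * Complex.abs z ≤ 1 * Complex.abs z := by
          apply mul_le_mul_of_nonneg_right _ (AbsoluteValue.nonneg _ _)
          rw [_root_.abs_of_nonneg ht.1]; exact ht.2
      _ < 1 := by rwa [one_mul]
  have hHcont : ∀ w ∈ unitDisk, ContinuousAt H w := by
    intro w hw
    exact ((hg.deriv w hw).continuousAt).div (hg w hw).continuousAt (hgne w hw)
  have hFcont : ∀ t ∈ S, ContinuousAt F t := by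
    intro t ht
    have hf : ContinuousAt (fun s : ℝ => (s:ℂ)*z) t :=
      (Complex.continuous_ofReal.mul continuous_const).continuousAt
    have hcomp : ContinuousAt (fun s : ℝ => H ((s:ℂ)*z)) t :=
      ContinuousAt.comp (g := H) (f := fun s : ℝ => (s:ℂ)*z) (x := t) (hHcont _ ht) hf
    exact continuousAt_const.mul hcomp
  have hFint : ∀ u ∈ Icc (0:ℝ) 1, IntervalIntegrable F volume 0 u := by
    intro u hu
    apply ContinuousOn.intervalIntegrable
    intro t ht
    have ht' : t ∈ Icc (0:ℝ) 1 := by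
      rcases ht with ht
      rw [uIcc_of_le hu.1] at ht
      exact ⟨ht.1, le_trans ht.2 hu.2⟩
    exact (hFcont t (hS_mem t ht')).continuousWithinAt
  set φ : ℝ → ℂ := fun u => ∫ t in (0:ℝ)..u, F t with hφ_def
  have hφd : ∀ u ∈ Icc (0:ℝ) 1, HasDerivAt φ (F u) u := by
    intro u hu
    exact intervalIntegral.integral_hasDerivAt_right (hFint u hu)
      (ContinuousAt.stronglyMeasurableAtFilter hS_open hFcont u (hS_mem u hu))
      (hFcont u (hS_mem u hu))
  set ψ : ℝ → ℂ := fun u => g ((u:ℂ)*z) * Complex.exp (-φ u) with hψ_def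
  have hψd : ∀ u ∈ uIcc (0:ℝ) 1, HasDerivAt ψ 0 u := by
    intro u hu
    rw [uIcc_of_le zero_le_one] at hu
    have huz : ((u:ℂ)*z) ∈ unitDisk := hS_mem u hu
    have h1 : HasDerivAt (fun s : ℝ => g ((s:ℂ)*z)) (deriv g ((u:ℂ)*z) * z) u := by
      have hga : DifferentiableAt ℂ g ((u:ℂ)*z) := (hg _ huz).differentiableAt
      have hinner : HasDerivAt (fun w : ℂ => g (w*z)) (deriv g ((u:ℂ)*z) * z) ((u:ℂ)) := by
        have := hga.hasDerivAt.comp (u:ℂ) ((hasDerivAt_id ((u:ℂ))).mul_const z)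
        simpa [Function.comp_def] using this
      exact hinner.comp_ofReal
    have h2 : HasDerivAt (fun s : ℝ => Complex.exp (-φ s)) (-(F u) * Complex.exp (-φ u)) u := by
      have := ((hφd u hu).neg).cexp
      simpa [mul_comm] using this
    have := h1.mul h2
    have heq : deriv g ((u:ℂ)*z) * z * Complex.exp (-φ u) +
        g ((u:ℂ)*z) * (-(F u) * Complex.exp (-φ u)) = 0 := by
      rw [hF_def, hH_def]
      have hgz : g ((u:ℂ)*z) ≠ 0 := hgne _ huz
      field_simp
      ring
    rw [heq] at this
    exact this
  have hzero : ψ 1 - ψ 0 = 0 := by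
    have := intervalIntegral.integral_eq_sub_of_hasDerivAt hψd
      (intervalIntegrable_const (c := (0:ℂ)))
    simpa using this.symm
  have hψ0 : ψ 0 = 1 := by
    simp [hψ_def, hφ_def, hg0]
  have hψ1 : ψ 1 = g z * Complex.exp (-φ 1) := by
    simp [hψ_def]
  rw [hψ1, hψ0] at hzero
  have : g z * Complex.exp (-φ 1) = 1 := by linear_combination hzero
  calc g z = g z * (Complex.exp (-φ 1) * Complex.exp (φ 1)) := by
        rw [← Complex.exp_add]; simp
    _ = (g z * Complex.exp (-φ 1)) * Complex.exp (φ 1) := by ring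
    _ = Complex.exp (φ 1) := by rw [this, one_mul]

lemma injOn_of_re_deriv_pos {f : ℂ → ℂ} (hfd : DifferentiableOn ℂ f unitDisk)
    (hre : ∀ w ∈ unitDisk, 0 < (deriv f w).re) : InjOn f unitDisk := by
  have hU : IsOpen unitDisk := Metric.isOpen_ball
  have hfa : AnalyticOnNhd ℂ f unitDisk := hfd.analyticOnNhd hU
  intro z₁ h₁ z₂ h₂ hf12
  by_contra hne
  set γ : ℝ → ℂ := fun t => z₁ + (t:ℂ)*(z₂ - z₁) with hγ_def
  have hseg : ∀ t : ℝ, t ∈ Icc (0:ℝ) 1 → γ t ∈ unitDisk := by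
    intro t ht
    have hsub := (convex_ball (0:ℂ) 1).segment_subset h₁ h₂
    rw [segment_eq_image'] at hsub
    have : z₁ + t • (z₂ - z₁) ∈ ball (0:ℂ) 1 := hsub ⟨t, ht, rfl⟩
    simp only [unitDisk, hγ_def, mem_ball, dist_zero_right]
    simpa [Complex.real_smul, mem_ball, dist_zero_right] using this
  have hdf_cont : ∀ t ∈ Icc (0:ℝ) 1, ContinuousAt (fun s : ℝ => deriv f (γ s)) t := by
    intro t ht
    have hγc : ContinuousAt γ t := by
      apply continuousAt_const.add
      exact (Complex.continuous_ofReal.mul continuous_const).continuousAt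
    exact ContinuousAt.comp (g := deriv f) (hfa.deriv _ (hseg t ht)).continuousAt hγc
  have hint : IntervalIntegrable (fun t : ℝ => (z₂ - z₁) * deriv f (γ t)) volume 0 1 := by
    apply ContinuousOn.intervalIntegrable
    intro t ht
    rw [uIcc_of_le zero_le_one] at ht
    exact (continuousAt_const.mul (hdf_cont t ht)).continuousWithinAt
  have hderiv : ∀ t ∈ uIcc (0:ℝ) 1,
      HasDerivAt (fun s : ℝ => f (γ s)) ((z₂ - z₁) * deriv f (γ t)) t := by
    intro t ht
    rw [uIcc_of_le zero_le_one] at ht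
    have hinner : HasDerivAt (fun w : ℂ => z₁ + w*(z₂-z₁)) (z₂ - z₁) ((t:ℂ)) := by
      simpa using (((hasDerivAt_id ((t:ℂ))).mul_const (z₂ - z₁)).const_add z₁)
    have houter : HasDerivAt f (deriv f (γ t)) (γ t) :=
      ((hfd (γ t) (hseg t ht)).differentiableAt (hU.mem_nhds (hseg t ht))).hasDerivAt
    have hcompc : HasDerivAt (fun w : ℂ => f (z₁ + w*(z₂-z₁)))
        (deriv f (γ t) * (z₂ - z₁)) ((t:ℂ)) := by
      have := houter.comp ((t:ℂ)) hinner
      simpa [hγ_def, Function.comp_def] using this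
    have := hcompc.comp_ofReal
    simpa [hγ_def, mul_comm] using this
  have hFTC := intervalIntegral.integral_eq_sub_of_hasDerivAt hderiv hint
  have hγ1 : γ 1 = z₂ := by simp [hγ_def]
  have hγ0 : γ 0 = z₁ := by simp [hγ_def]
  rw [hγ1, hγ0, hf12, sub_self] at hFTC
  rw [intervalIntegral.integral_const_mul] at hFTC
  have hz12 : z₂ - z₁ ≠ 0 := sub_ne_zero.2 (Ne.symm hne)
  have hI : (∫ t in (0:ℝ)..1, deriv f (γ t)) = 0 := by
    rcases mul_eq_zero.mp hFTC with h | h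
    · exact absurd h hz12
    · exact h
  have hint2 : IntervalIntegrable (fun t : ℝ => deriv f (γ t)) volume 0 1 := by
    apply ContinuousOn.intervalIntegrable
    intro t ht
    rw [uIcc_of_le zero_le_one] at ht
    exact (hdf_cont t ht).continuousWithinAt
  have hre_int : (∫ t in (0:ℝ)..1, (deriv f (γ t)).re) = 0 := by
    have := Complex.reCLM.intervalIntegral_comp_comm hint2
    simp only [Complex.reCLM_apply] at this
    rw [this, hI]
    simp
  have hpos : 0 < ∫ t in (0:ℝ)..1, (deriv f (γ t)).re := by
    apply intervalIntegral.intervalIntegral_pos_of_pos_on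
    · apply ContinuousOn.intervalIntegrable
      intro t ht
      rw [uIcc_of_le zero_le_one] at ht
      exact (Complex.continuous_re.continuousAt.comp (hdf_cont t ht)).continuousWithinAt
    · intro t ht
      exact hre _ (hseg t ⟨ht.1.le, ht.2.le⟩)
    · norm_num
  rw [hre_int] at hpos
  exact lt_irrefl 0 hpos

lemma chain_bound {b R t u Q : ℝ} (hb : 0 ≤ b) (hbR : b < R) (ht : 0 < t) (ht1 : t ≤ 1)
    (hu : 0 ≤ u) (hu1 : u < 1) (hQ : 0 ≤ Q)
    (hq : Q * (R - b*(t*u)) ≤ (R^2 - b^2)*(t*u)) :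
    Q / t ≤ (R^2-b^2)/R + ((R^2-b^2)*b/R^2) * t
      + ((R^2-b^2)*b^2/R^3 + (R+b)*b^3/R^3) * t^2 := by
  have hR : 0 < R := lt_of_le_of_lt hb hbR
  have hRt : 0 < R - b*t := by nlinarith
  have hb2 : (0:ℝ) ≤ R^2 - b^2 := by nlinarith
  have step1 : Q * (R - b*t) ≤ (R^2 - b^2)*t := by
    nlinarith [mul_nonneg (mul_nonneg (mul_nonneg hQ hb) ht.le) (by linarith : (0:ℝ) ≤ 1-u),
      mul_nonneg (mul_nonneg hb2 ht.le) (by linarith : (0:ℝ) ≤ 1-u)]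
  have step2 : Q / t ≤ (R^2-b^2)/(R - b*t) := by
    rw [div_le_div_iff₀ ht hRt]
    linarith [step1]
  refine le_trans step2 ?_
  rw [div_le_iff₀ hRt]
  have key : ((R^2-b^2)/R + ((R^2-b^2)*b/R^2) * t
      + ((R^2-b^2)*b^2/R^3 + (R+b)*b^3/R^3) * t^2) * (R - b*t) - (R^2-b^2)
      = b^3*t^2*(R+b)*(1-t) / R^2 := by
    field_simp
    ring
  have hnn : (0:ℝ) ≤ b^3*t^2*(R+b)*(1-t)/R^2 :=
    div_nonneg (mul_nonneg (mul_nonneg (by positivity) (by linarith)) (by linarith)) (sq_nonneg R)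
  linarith [key, hnn]

lemma poly_integral (A₀ A₁ A₂ : ℝ) :
    (∫ t in (0:ℝ)..1, (A₀ + A₁ * t + A₂ * t^2)) = A₀ + A₁/2 + A₂/3 := by
  rw [intervalIntegral.integral_add, intervalIntegral.integral_add]
  · rw [intervalIntegral.integral_const, intervalIntegral.integral_const_mul,
      intervalIntegral.integral_const_mul, integral_id, integral_pow]
    norm_num
    ring
  · exact (continuous_const.intervalIntegrable _ _)
  · exact ((continuous_const.mul continuous_id).intervalIntegrable _ _)
  · exact ((continuous_const.add (continuous_const.mul continuous_id)).intervalIntegrable _ _)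
  · exact ((continuous_const.mul (continuous_pow 2)).intervalIntegrable _ _)

lemma num_case2 {b R : ℝ} (h2 : R^2 = 2*b) (hb : 1/2 ≤ b) (hbR : b < R) :
    (R^2-b^2)/R + ((R^2-b^2)*b/R^2)/2 + ((R^2-b^2)*b^2/R^3 + (R+b)*b^3/R^3)/3 ≤ 157/100 := by
  have hR : 0 < R := lt_of_le_of_lt (by linarith) hbR
  have hR1 : 1 ≤ R := by nlinarith
  have hR2 : R < 2 := by nlinarith
  have hbeq : b = R^2/2 := by linarith
  subst hbeq
  have key : (R^2-(R^2/2)^2)/R + ((R^2-(R^2/2)^2)*(R^2/2)/R^2)/2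
      + ((R^2-(R^2/2)^2)*(R^2/2)^2/R^3 + (R+R^2/2)*(R^2/2)^3/R^3)/3
      = R + R^2/4 - R^3/6 - R^4/48 := by
    field_simp
    ring
  rw [key]
  nlinarith [sq_nonneg (R - 17/10), sq_nonneg (R-1), sq_nonneg (R-2),
    mul_nonneg (sub_nonneg.2 hR1) (sub_nonneg.2 hR2.le), sq_nonneg (R^2 - 3)]

lemma num_case1a {b R : ℝ} (h : R = b + 1/2) (hb : 0 ≤ b) (hb2 : b ≤ 1/2) :
    (R^2-b^2)/R + ((R^2-b^2)*b/R^2)/2 + ((R^2-b^2)*b^2/R^3 + (R+b)*b^3/R^3)/3 ≤ 157/100 := by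
  have hR : 0 < R := by rw [h]; linarith
  have key : (R^2-b^2)/R + ((R^2-b^2)*b/R^2)/2 + ((R^2-b^2)*b^2/R^3 + (R+b)*b^3/R^3)/3
      = (3*((R^2-b^2)*(R^2 + b*R/2 + b^2/3)) + (R+b)*b^3)/(3*R^3) := by
    field_simp
    ring
  rw [key, div_le_iff₀ (by positivity)]
  subst h
  nlinarith [sq_nonneg b, sq_nonneg (b-1/2), mul_nonneg hb hb, sq_nonneg (b*(b-1/2))]

lemma num_case1b {b R : ℝ} (h : R = 1/2 - b) (hb : 0 ≤ b) (hbR : b < R) :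
    (R^2-b^2)/R + ((R^2-b^2)*b/R^2)/2 + ((R^2-b^2)*b^2/R^3 + (R+b)*b^3/R^3)/3 ≤ 157/100 := by
  have hR : 0 < R := lt_of_le_of_lt hb hbR
  have hb4 : b < 1/4 := by rw [h] at hbR; linarith
  have key : (R^2-b^2)/R + ((R^2-b^2)*b/R^2)/2 + ((R^2-b^2)*b^2/R^3 + (R+b)*b^3/R^3)/3
      = (3*((R^2-b^2)*(R^2 + b*R/2 + b^2/3)) + (R+b)*b^3)/(3*R^3) := by
    field_simp
    ring
  rw [key, div_le_iff₀ (by positivity)]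
  subst h
  nlinarith [sq_nonneg b, sq_nonneg (b-1/4), mul_nonneg hb hb, sq_nonneg (b*(b-1/4))]

lemma pi_half_big : (157/100 : ℝ) < Real.pi / 2 := by
  have := Real.pi_gt_d6
  linarith

/-- circular-region sufficient condition for uniform convexity. -/
theorem ucv_of_disk_condition (a : ℝ) (ha : 1 / 2 < a) (f : ℂ → ℂ)
    (hf : IsNormalized f)
    (h : ∀ z ∈ unitDisk,
      ‖1 + z * deriv (deriv f) z / deriv f z - (a : ℂ)‖
        < if a ≤ 3 / 2 then a - 1 / 2 else Real.sqrt (2 * a - 2)) :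
    IsUCV f := by
  obtain ⟨hfd, hf0, hf1⟩ := hf
  set R : ℝ := if a ≤ 3 / 2 then a - 1 / 2 else Real.sqrt (2 * a - 2) with hRdef
  set c : ℝ := a - 1 with hcdef
  have hU : IsOpen unitDisk := Metric.isOpen_ball
  have h0U : (0:ℂ) ∈ unitDisk := mem_ball_self one_pos
  have hfa : AnalyticOnNhd ℂ f unitDisk := hfd.analyticOnNhd hU
  set g : ℂ → ℂ := deriv f with hgdef
  have hga : AnalyticOnNhd ℂ g unitDisk := hfa.deriv
  have hcR : |c| < R := by
    have h0 := h 0 h0U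
    have he : (1 : ℂ) + 0 * deriv (deriv f) 0 / deriv f 0 - (a:ℂ) = ((-c : ℝ) : ℂ) := by
      rw [hcdef]; push_cast; ring
    rw [he, ← Complex.abs_apply, Complex.abs_ofReal, abs_neg] at h0
    exact h0
  have hb0 : (0:ℝ) ≤ |c| := abs_nonneg c
  have hR0 : 0 < R := lt_of_le_of_lt hb0 hcR
  have hK : ∀ z ∈ unitDisk, g z ≠ 0 →
      Complex.abs (z * deriv g z / g z) ≤ R + |c| := by
    intro z hz _
    have hz' := h z hz
    have he : z * deriv (deriv f) z / deriv f z
        = (1 + z * deriv (deriv f) z / deriv f z - (a:ℂ)) + ((c:ℝ):ℂ) := by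
      rw [hcdef]; push_cast; ring
    rw [hgdef]
    rw [he]
    calc Complex.abs ((1 + z * deriv (deriv f) z / deriv f z - (a:ℂ)) + ((c:ℝ):ℂ))
        ≤ Complex.abs (1 + z * deriv (deriv f) z / deriv f z - (a:ℂ))
          + Complex.abs (((c:ℝ):ℂ)) := Complex.abs.add_le _ _
      _ ≤ R + |c| := by
          rw [Complex.abs_ofReal]
          exact add_le_add hz'.le le_rfl
  have hgne : ∀ z ∈ unitDisk, g z ≠ 0 := fun z hz =>
    deriv_ne_zero_of_bound hga hf1 (R + |c|) hK hz
  set q : ℂ → ℂ := fun w => w * deriv g w / g w with hq_def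
  have hq0 : q 0 = 0 := by simp [hq_def]
  have hqd : DifferentiableOn ℂ q unitDisk := by
    apply DifferentiableOn.div
    · exact differentiableOn_id.mul (hga.deriv.differentiableOn)
    · exact hga.differentiableOn
    · exact hgne
  have hmem : ∀ z ∈ unitDisk, Complex.abs (q z - ((c:ℝ):ℂ)) < R := by
    intro z hz
    have hz' := h z hz
    have he : q z - ((c:ℝ):ℂ) = 1 + z * deriv (deriv f) z / deriv f z - (a:ℂ) := by
      rw [hq_def, hcdef, hgdef]; push_cast; ring
    rw [he]
    exact hz'
  have hre : ∀ z ∈ unitDisk, 0 < (g z).re := by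
    intro z hz
    have habsz : Complex.abs z < 1 := by simpa [unitDisk, mem_ball, dist_zero_right] using hz
    set I : ℂ := ∫ t in (0:ℝ)..1, z * (deriv g ((t:ℂ)*z) / g ((t:ℂ)*z)) with hI_def
    have hrep : g z = Complex.exp I := deriv_eq_exp_integral hga hgne hf1 hz
    set b : ℝ := |c| with hbdef
    set A₀ : ℝ := (R^2-b^2)/R with hA0
    set A₁ : ℝ := (R^2-b^2)*b/R^2 with hA1
    set A₂ : ℝ := (R^2-b^2)*b^2/R^3 + (R+b)*b^3/R^3 with hA2
    have hIb : Complex.abs I ≤ A₀ + A₁/2 + A₂/3 := by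
      have hae : ∀ᵐ (t : ℝ) ∂(volume.restrict (Set.uIoc (0:ℝ) 1)),
          ‖z * (deriv g ((t:ℂ)*z) / g ((t:ℂ)*z))‖ ≤ A₀ + A₁*t + A₂*t^2 := by
        rw [Set.uIoc_of_le (zero_le_one (α := ℝ))]
        refine (ae_restrict_iff' measurableSet_Ioc).mpr (ae_of_all _ ?_)
        intro t ht
        have ht0 : 0 < t := ht.1
        have ht1 : t ≤ 1 := ht.2
        have hwU : ((t:ℂ)*z) ∈ unitDisk := by
          simp only [unitDisk, mem_ball, dist_zero_right, Complex.norm_eq_abs,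
            map_mul, Complex.abs_ofReal]
          calc |t| * Complex.abs z ≤ 1 * Complex.abs z := by
                apply mul_le_mul_of_nonneg_right _ (AbsoluteValue.nonneg _ _)
                rw [_root_.abs_of_nonneg ht0.le]; exact ht1
            _ < 1 := by rwa [one_mul]
        have hqw := schwarz_bound hqd hq0 hcR hmem hwU
        have habstz : Complex.abs ((t:ℂ)*z) = t * Complex.abs z := by
          rw [map_mul, Complex.abs_ofReal, _root_.abs_of_pos ht0]
        rw [habstz] at hqw
        have hqe : q ((t:ℂ)*z) = (t:ℂ) * (z * (deriv g ((t:ℂ)*z) / g ((t:ℂ)*z))) := by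
          rw [hq_def]; ring
        have h5 : Complex.abs (q ((t:ℂ)*z))
            = t * Complex.abs (z * (deriv g ((t:ℂ)*z) / g ((t:ℂ)*z))) := by
          rw [hqe, map_mul, Complex.abs_ofReal, _root_.abs_of_pos ht0]
        have hnorm : ‖z * (deriv g ((t:ℂ)*z) / g ((t:ℂ)*z))‖
            = Complex.abs (q ((t:ℂ)*z)) / t := by
          rw [Complex.norm_eq_abs, h5, mul_comm t _, mul_div_assoc, div_self ht0.ne', mul_one]
        rw [hnorm]
        have hcb : c^2 = b^2 := by rw [hbdef, _root_.sq_abs]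
        rw [hcb] at hqw
        exact chain_bound hb0 hcR ht0 ht1 (AbsoluteValue.nonneg _ _) habsz
          (AbsoluteValue.nonneg _ _) hqw
      have hgi : IntervalIntegrable (fun t : ℝ => A₀ + A₁*t + A₂*t^2) volume 0 1 :=
        ((continuous_const.add (continuous_const.mul continuous_id)).add
          (continuous_const.mul (continuous_pow 2))).intervalIntegrable _ _
      have hRb2 : (0:ℝ) ≤ R^2 - b^2 := by nlinarith
      have h0' : 0 ≤ A₀ := by rw [hA0]; exact div_nonneg hRb2 hR0.le
      have h1' : 0 ≤ A₁ := by rw [hA1]; exact div_nonneg (mul_nonneg hRb2 hb0) (by positivity)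
      have h2' : 0 ≤ A₂ := by
        rw [hA2]
        have : (0:ℝ) ≤ R + b := by linarith
        positivity
      have hS : (0:ℝ) ≤ A₀ + A₁/2 + A₂/3 :=
        add_nonneg (add_nonneg h0' (div_nonneg h1' (by norm_num)))
          (div_nonneg h2' (by norm_num))
      have := intervalIntegral.norm_integral_le_abs_of_norm_le hae hgi
      rw [poly_integral, _root_.abs_of_nonneg hS] at this
      rw [hI_def, ← Complex.norm_eq_abs]
      exact this
    have hnum : A₀ + A₁/2 + A₂/3 ≤ 157/100 := by
      by_cases hca : a ≤ 3/2
      · have hReq : R = a - 1/2 := by rw [hRdef, if_pos (by exact_mod_cast hca)]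
        by_cases hc0 : 0 ≤ c
        · have hbe : b = c := by rw [hbdef, _root_.abs_of_nonneg hc0]
          exact num_case1a (by rw [hbe, hReq, hcdef]; ring) (hbe ▸ hc0)
            (by rw [hbe, hcdef]; linarith)
        · push_neg at hc0
          have hbe : b = -c := by rw [hbdef, _root_.abs_of_neg hc0]
          exact num_case1b (by rw [hbe, hReq, hcdef]; ring) (by rw [hbe]; linarith)
            (hbdef ▸ hcR)
      · push_neg at hca
        have hReq : R = Real.sqrt (2*a-2) := by rw [hRdef, if_neg (by exact_mod_cast hca.not_ge)]
        have hR2 : R^2 = 2*a - 2 := by rw [hReq, Real.sq_sqrt]; linarith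
        have hc0 : 0 ≤ c := by rw [hcdef]; linarith
        have hbe : b = c := by rw [hbdef, _root_.abs_of_nonneg hc0]
        refine num_case2 ?_ ?_ (hbdef ▸ hcR)
        · rw [hbe, hcdef]; linarith [hR2]
        · rw [hbe, hcdef]; linarith
    have hIm : |I.im| < Real.pi/2 := by
      have h1 : |I.im| ≤ Complex.abs I := Complex.abs_im_le_abs I
      have := pi_half_big
      linarith
    rw [hrep, Complex.exp_re]
    apply mul_pos (Real.exp_pos _)
    apply Real.cos_pos_of_mem_Ioo
    constructor
    · have := abs_lt.mp hIm; linarith [this.1]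
    · exact (abs_lt.mp hIm).2
  have hinj : InjOn f unitDisk := injOn_of_re_deriv_pos hfd (by rw [← hgdef] at *; exact hre)
  refine ⟨⟨hfd, hf0, hf1⟩, hinj, ?_⟩
  intro z hz
  exact ucv_pointwise a ha _ (h z hz)
end
end

section
/- Let k ≥ 0 and let f be normalized analytic and univalent on 𝔻. Then Re(1 + (z − ζ)·f''(z)/f'(z)) ≥ 0 for all z ∈ 𝔻 and all ζ ∈ ℂ with |ζ| ≤ k if and only if Re(1 + z·f''(z)/f'(z)) > k·|z·f''(z)/f'(z)| for all z ∈ 𝔻. (These are the two analytic characterizations of k-uniformly convex functions.) -/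
open Complex Metric Set

noncomputable section

open Filter Topology

/-- If the normalized analytic `f` satisfies `0 ≤ Re (1 + z f''/f')` on the unit disk
(with the junk-value convention for division), then `f'` does not vanish on the disk. -/
lemma deriv_ne_zero_of_re_nonneg {f : ℂ → ℂ}
    (hdf : DifferentiableOn ℂ f unitDisk) (h0 : deriv f 0 = 1)
    (hpos : ∀ w ∈ unitDisk, 0 ≤ (1 + w * deriv (deriv f) w / deriv f w).re) :
    ∀ z ∈ unitDisk, deriv f z ≠ 0 := by
  intro w₀ hw₀ hzero
  have hop : IsOpen unitDisk := isOpen_ball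
  have hfa : AnalyticOnNhd ℂ f unitDisk := hdf.analyticOnNhd hop
  have hd1 : AnalyticOnNhd ℂ (deriv f) unitDisk := hfa.deriv
  have h0mem : (0:ℂ) ∈ unitDisk := mem_ball_self one_pos
  have hw₀ne : w₀ ≠ 0 := by
    rintro rfl
    rw [h0] at hzero
    exact one_ne_zero hzero
  have hnev : ¬ ∀ᶠ z in 𝓝 w₀, deriv f z = 0 := by
    intro hev
    have hev' : deriv f =ᶠ[𝓝 w₀] 0 := hev.mono fun x hx => by simpa using hx
    have heq : EqOn (deriv f) 0 unitDisk :=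
      hd1.eqOn_zero_of_preconnected_of_eventuallyEq_zero
        (convex_ball (0:ℂ) 1).isPreconnected hw₀ hev'
    have h00 := heq h0mem
    simp only [Pi.zero_apply, h0] at h00
    exact one_ne_zero h00
  obtain ⟨n, g, hg, hgne, hev⟩ :=
    ((hd1 w₀ hw₀).exists_eventuallyEq_pow_smul_nonzero_iff).mpr hnev
  have hn0 : n ≠ 0 := by
    rintro rfl
    have h := hev.self_of_nhds
    simp only [pow_zero, one_smul] at h
    rw [hzero] at h
    exact hgne h.symm
  obtain ⟨m, rfl⟩ := Nat.exists_eq_succ_of_ne_zero hn0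
  -- continuity of deriv g at w₀
  obtain ⟨R, hRpos, hgball⟩ := hg.exists_ball_analyticOnNhd
  have hg' : AnalyticAt ℂ (deriv g) w₀ := hgball.deriv w₀ (mem_ball_self hRpos)
  have hgne' : ∀ᶠ z in 𝓝 w₀, g z ≠ 0 := hg.continuousAt.eventually_ne hgne
  have hgdiff : ∀ᶠ z in 𝓝 w₀, DifferentiableAt ℂ g z := by
    filter_upwards [hg.eventually_analyticAt] with z hz using hz.differentiableAt
  have hev' : deriv f =ᶠ[𝓝 w₀] (fun z => (z - w₀) ^ (m+1) * g z) :=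
    hev.mono fun z hz => by simpa [smul_eq_mul] using hz
  have hdev : deriv (deriv f) =ᶠ[𝓝 w₀] deriv (fun z => (z - w₀) ^ (m+1) * g z) :=
    hev'.deriv
  have hdformula : ∀ᶠ z in 𝓝 w₀, deriv (fun z => (z - w₀) ^ (m+1) * g z) z
      = ((m:ℂ)+1) * (z - w₀) ^ m * g z + (z - w₀) ^ (m+1) * deriv g z := by
    filter_upwards [hgdiff] with z hz
    have h1 : HasDerivAt (fun z => (z - w₀) ^ (m+1)) (((m:ℂ)+1) * (z - w₀) ^ m) z := by
      have := ((hasDerivAt_id z).sub_const w₀).pow (m+1)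
      simp at this; exact this
    have h2 := h1.mul hz.hasDerivAt
    exact h2.deriv
  have key : ∀ᶠ z in 𝓝 w₀, z ≠ w₀ →
      (1 + z * deriv (deriv f) z / deriv f z)
        = 1 + ((m:ℂ)+1) * z / (z - w₀) + z * deriv g z / g z := by
    filter_upwards [hev', hdev, hdformula, hgne'] with z e1 e2 e3 e4 hzw
    have hzw' : z - w₀ ≠ 0 := sub_ne_zero.mpr hzw
    rw [e2, e3, e1]
    field_simp
    ring
  -- the path t ↦ t • w₀
  have hΦ : Tendsto (fun t : ℝ => (t:ℂ) * w₀) (𝓝[<] (1:ℝ)) (𝓝 w₀) := by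
    have h1 : Tendsto (fun t : ℝ => (t:ℂ) * w₀) (𝓝 (1:ℝ)) (𝓝 ((1:ℂ) * w₀)) := by
      exact ((Complex.continuous_ofReal.mul continuous_const).tendsto 1)
    simpa using h1.mono_left nhdsWithin_le_nhds
  set L : ℝ := (w₀ * deriv g w₀ / g w₀).re with hL
  have hCcont : ContinuousAt (fun z => (z * deriv g z / g z).re) w₀ := by
    apply Complex.continuous_re.continuousAt.comp
    exact (continuousAt_id.mul hg'.continuousAt).div hg.continuousAt hgne
  have hC : Tendsto (fun t : ℝ => (((t:ℂ) * w₀) * deriv g ((t:ℂ) * w₀) / g ((t:ℂ) * w₀)).re)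
      (𝓝[<] (1:ℝ)) (𝓝 L) := by
    exact hCcont.tendsto.comp hΦ
  have hCe : ∀ᶠ (t : ℝ) in 𝓝[<] (1:ℝ),
      (((t:ℂ) * w₀) * deriv g ((t:ℂ) * w₀) / g ((t:ℂ) * w₀)).re < L + 1 := by
    have hL1 : ∀ᶠ x in 𝓝 L, x < L + 1 := gt_mem_nhds (by linarith)
    exact hC.eventually hL1
  set c : ℝ := max (L + 3) 1 with hc
  have hc1 : (1:ℝ) ≤ c := le_max_right _ _
  have hLc : L + 3 ≤ c := le_max_left _ _
  set t₀ : ℝ := max (c/(c+1)) 0 with ht₀def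
  have ht₀ : t₀ < 1 := by
    apply max_lt _ one_pos
    rw [div_lt_one (by linarith)]
    linarith
  have hIoo : Ioo t₀ 1 ∈ 𝓝[<] (1:ℝ) := Ioo_mem_nhdsLT ht₀
  have hkey2 := hΦ.eventually key
  have hw₀lt : ‖w₀‖ < 1 := mem_ball_zero_iff.mp hw₀
  have final : ∀ᶠ t in 𝓝[<] (1:ℝ), False := by
    filter_upwards [hCe, hkey2, hIoo] with t hCt hk htIoo
    have ht0 : 0 < t := lt_of_le_of_lt (le_max_right _ _) htIoo.1
    have hlt1 : t < 1 := htIoo.2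
    have hΦne : (t:ℂ) * w₀ ≠ w₀ := by
      intro h
      have h2 : ((t:ℂ) - 1) * w₀ = 0 := by rw [sub_mul, one_mul, h, sub_self]
      rcases mul_eq_zero.mp h2 with h' | h'
      · have : (t:ℝ) = 1 := by exact_mod_cast sub_eq_zero.mp h'
        linarith
      · exact hw₀ne h'
    have heq := hk hΦne
    have hmem : (t:ℂ) * w₀ ∈ unitDisk := by
      rw [unitDisk, mem_ball_zero_iff, norm_mul, Complex.norm_real, Real.norm_eq_abs,
        _root_.abs_of_pos ht0]
      nlinarith
    have hge := hpos ((t:ℂ) * w₀) hmem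
    rw [heq] at hge
    have hne1 : (t:ℂ) - 1 ≠ 0 := by
      intro h
      have : (t:ℝ) = 1 := by exact_mod_cast sub_eq_zero.mp h
      linarith
    have hterm : ((m:ℂ)+1) * ((t:ℂ) * w₀) / ((t:ℂ) * w₀ - w₀)
        = ((((m:ℝ)+1) * t / (t-1) : ℝ) : ℂ) := by
      have h3 : (t:ℂ) * w₀ - w₀ = ((t:ℂ) - 1) * w₀ := by ring
      rw [h3]
      push_cast
      field_simp
    rw [hterm] at hge
    rw [Complex.add_re, Complex.add_re, Complex.one_re, Complex.ofReal_re] at hge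
    -- arithmetic contradiction
    have h1 : c/(c+1) < t := lt_of_le_of_lt (le_max_left _ _) htIoo.1
    have hcpos : (0:ℝ) < c + 1 := by linarith
    have htc : c * (1 - t) < t := by
      rw [div_lt_iff₀ hcpos] at h1
      nlinarith
    have hm1 : (1:ℝ) ≤ (m:ℝ) + 1 := by
      have : (0:ℝ) ≤ (m:ℝ) := Nat.cast_nonneg m
      linarith
    have hdivle : ((m:ℝ)+1) * t / (t-1) ≤ -c := by
      rw [div_le_iff_of_neg (by linarith : t - 1 < 0)]
      nlinarith
    linarith
  obtain ⟨t, ht⟩ := final.exists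
  exact ht

/-- Strict positivity via the maximum modulus principle. -/
lemma re_pos_of_re_nonneg {f : ℂ → ℂ}
    (hdf : DifferentiableOn ℂ f unitDisk)
    (hnz : ∀ z ∈ unitDisk, deriv f z ≠ 0)
    (hpos : ∀ w ∈ unitDisk, 0 ≤ (1 + w * deriv (deriv f) w / deriv f w).re) :
    ∀ z ∈ unitDisk, 0 < (1 + z * deriv (deriv f) z / deriv f z).re := by
  intro z hz
  have hop : IsOpen unitDisk := isOpen_ball
  have hfa : AnalyticOnNhd ℂ f unitDisk := hdf.analyticOnNhd hop
  have hd1 : DifferentiableOn ℂ (deriv f) unitDisk := hfa.deriv.differentiableOn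
  have hd2 : DifferentiableOn ℂ (deriv (deriv f)) unitDisk := hfa.deriv.deriv.differentiableOn
  set p : ℂ → ℂ := fun w => 1 + w * deriv (deriv f) w / deriv f w with hp
  have hpdiff : DifferentiableOn ℂ p unitDisk := by
    exact (differentiableOn_const _).add
      (((differentiableOn_id.mul hd2).div hd1 hnz))
  set G : ℂ → ℂ := fun w => Complex.exp (-(p w)) with hG
  have hGdiff : DifferentiableOn ℂ G unitDisk := hpdiff.neg.cexp
  by_contra hcon
  push_neg at hcon
  have hre0 : (p z).re = 0 := le_antisymm hcon (hpos z hz)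
  have hmax : IsMaxOn (norm ∘ G) unitDisk z := by
    intro w hw
    simp only [Function.comp_apply, hG, Complex.norm_exp,
      Complex.neg_re, Set.mem_setOf_eq]
    rw [hre0, neg_zero]
    exact Real.exp_le_exp.mpr (by linarith [show 0 ≤ (p w).re from hpos w hw])
  have heqOn := Complex.eqOn_of_isPreconnected_of_isMaxOn_norm
    (convex_ball (0:ℂ) 1).isPreconnected isOpen_ball hGdiff hz hmax
  have h0mem : (0:ℂ) ∈ unitDisk := mem_ball_self one_pos
  have hG0 : G 0 = G z := heqOn h0mem
  have hp0 : p 0 = 1 := by simp [hp]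
  have hcontr : Real.exp (-1) = Real.exp 0 := by
    have h := congrArg norm hG0
    simp only [hG, Complex.norm_exp, Complex.neg_re, hp0, hre0, Complex.one_re, neg_zero] at h
    exact h
  have := Real.exp_lt_exp.mpr (show (-1:ℝ) < 0 by norm_num)
  rw [hcontr] at this
  exact lt_irrefl _ this

/-- the two analytic characterizations of k-uniformly convex
functions agree. -/
theorem kucv_two_variable_iff_one_variable (k : ℝ) (hk : 0 ≤ k) (f : ℂ → ℂ)
    (hf : IsNormalized f) (hinj : Set.InjOn f unitDisk) :
    (∀ z ∈ unitDisk, ∀ ζ : ℂ, ‖ζ‖ ≤ k →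
        0 ≤ (1 + (z - ζ) * deriv (deriv f) z / deriv f z).re) ↔
    (∀ z ∈ unitDisk,
        k * ‖z * deriv (deriv f) z / deriv f z‖
          < (1 + z * deriv (deriv f) z / deriv f z).re) := by
  obtain ⟨hdf, hf0, hf'0⟩ := hf
  have hop : IsOpen unitDisk := isOpen_ball
  constructor
  · -- two-variable ⇒ one-variable
    intro hL z hz
    have hpos : ∀ w ∈ unitDisk, 0 ≤ (1 + w * deriv (deriv f) w / deriv f w).re := by
      intro w hw
      have h := hL w hw 0 (by simpa using hk)
      simpa using h
    have hnz := deriv_ne_zero_of_re_nonneg hdf hf'0 hpos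
    by_cases hu : z * deriv (deriv f) z / deriv f z = 0
    · rw [hu]
      simp
    · rcases eq_or_lt_of_le hk with hk0 | hkpos
      · rw [← hk0, zero_mul]
        exact re_pos_of_re_nonneg hdf hnz hpos z hz
      · set a := deriv (deriv f) z / deriv f z with ha
        have hane : a ≠ 0 := by
          intro h
          apply hu
          rw [mul_div_assoc, ← ha, h, mul_zero]
        have hapos : 0 < ‖a‖ := norm_pos_iff.mpr hane
        set ζ₀ : ℂ := (k:ℂ) * (starRingEnd ℂ) a / ((‖a‖ : ℝ) : ℂ) with hζ
        have habs : ‖ζ₀‖ = k := by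
          rw [hζ, norm_div, norm_mul, Complex.norm_conj,
            Complex.norm_of_nonneg hk, Complex.norm_of_nonneg (norm_nonneg a)]
          field_simp
        have hmul : ζ₀ * a = ((k * ‖a‖ : ℝ) : ℂ) := by
          rw [hζ]
          have h1 : (k:ℂ) * (starRingEnd ℂ) a / ((‖a‖ : ℝ) : ℂ) * a
              = (k:ℂ) * (a * (starRingEnd ℂ) a) / ((‖a‖ : ℝ) : ℂ) := by ring
          rw [h1, Complex.mul_conj, Complex.normSq_eq_norm_sq]
          have hne : ((‖a‖ : ℝ) : ℂ) ≠ 0 := by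
            simpa using ne_of_gt hapos
          field_simp
          push_cast
          ring
        have hre : (ζ₀ * a).re = k * ‖a‖ := by rw [hmul, Complex.ofReal_re]
        have hL' := hL z hz ζ₀ (le_of_eq habs)
        have hcalc : 1 + (z - ζ₀) * deriv (deriv f) z / deriv f z
            = 1 + z * (deriv (deriv f) z / deriv f z) - ζ₀ * a := by
          rw [mul_div_assoc, ← ha]
          ring
        rw [hcalc, Complex.sub_re] at hL'
        have hge : k * ‖a‖ ≤ (1 + z * (deriv (deriv f) z / deriv f z)).re := by
          rw [← hre]; linarith
        simp only [mul_div_assoc, ← ha]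
        rw [norm_mul]
        have hzlt : ‖z‖ < 1 := by
          exact mem_ball_zero_iff.mp hz
        have habz : 0 ≤ ‖z‖ := norm_nonneg _
        have hge' : k * ‖a‖ ≤ (1 + z * a).re := by rw [ha]; exact hge
        nlinarith [mul_pos (mul_pos hkpos hapos) (sub_pos.mpr hzlt)]
  · -- one-variable ⇒ two-variable
    intro hR z hz ζ hζk
    have hpos : ∀ w ∈ unitDisk, 0 ≤ (1 + w * deriv (deriv f) w / deriv f w).re := by
      intro w hw
      have h := hR w hw
      have h0 : 0 ≤ k * ‖w * deriv (deriv f) w / deriv f w‖ :=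
        mul_nonneg hk (norm_nonneg _)
      linarith
    have hnz := deriv_ne_zero_of_re_nonneg hdf hf'0 hpos
    have hfa : AnalyticOnNhd ℂ f unitDisk := hdf.analyticOnNhd hop
    have hd1 : DifferentiableOn ℂ (deriv f) unitDisk := hfa.deriv.differentiableOn
    have hd2 : DifferentiableOn ℂ (deriv (deriv f)) unitDisk :=
      hfa.deriv.deriv.differentiableOn
    -- step: scaled-center inequality on subdisks
    have hstep : ∀ t : ℝ, ‖z‖ < t → t < 1 →
        0 ≤ (1 + (z - (t:ℂ) * ζ) * deriv (deriv f) z / deriv f z).re := by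
      intro t hzt ht1
      have ht0 : 0 < t := lt_of_le_of_lt (norm_nonneg z) hzt
      set F : ℂ → ℂ :=
        fun w => Complex.exp (-(1 + (w - (t:ℂ) * ζ) * deriv (deriv f) w / deriv f w)) with hF
      have hFdiff : DifferentiableOn ℂ F unitDisk := by
        apply DifferentiableOn.cexp
        apply DifferentiableOn.neg
        exact (differentiableOn_const _).add
          (((differentiableOn_id.sub (differentiableOn_const _)).mul hd2).div hd1 hnz)
      have hsub : closure (ball (0:ℂ) t) ⊆ unitDisk := by
        rw [closure_ball (0:ℂ) (ne_of_gt ht0)]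
        exact closedBall_subset_ball ht1
      have hbd : ∀ w ∈ frontier (ball (0:ℂ) t), ‖F w‖ ≤ 1 := by
        intro w hw
        rw [frontier_ball (0:ℂ) (ne_of_gt ht0)] at hw
        have hwt : ‖w‖ = t := by
          simpa using hw
        have hwD : w ∈ unitDisk := mem_ball_zero_iff.mpr (by rw [hwt]; exact ht1)
        have hRw := hR w hwD
        rw [hF, Complex.norm_exp, Real.exp_le_one_iff,
          Complex.neg_re, neg_nonpos]
        set q : ℂ := deriv (deriv f) w / deriv f w with hq
        have hsplit : 1 + (w - (t:ℂ) * ζ) * deriv (deriv f) w / deriv f w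
            = 1 + w * q - (t:ℂ) * (ζ * q) := by
          rw [mul_div_assoc, ← hq]
          ring
        rw [hsplit, Complex.sub_re]
        have h1 : ((t:ℂ) * (ζ * q)).re ≤ t * (k * ‖q‖) := by
          calc ((t:ℂ) * (ζ * q)).re = t * (ζ * q).re := Complex.re_ofReal_mul t (ζ * q)
            _ ≤ t * ‖ζ * q‖ :=
                mul_le_mul_of_nonneg_left (Complex.re_le_norm _) ht0.le
            _ = t * (‖ζ‖ * ‖q‖) := by rw [norm_mul]
            _ ≤ t * (k * ‖q‖) := by
                apply mul_le_mul_of_nonneg_left _ ht0.le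
                exact mul_le_mul_of_nonneg_right hζk (norm_nonneg _)
        have h2 : k * (t * ‖q‖) < (1 + w * q).re := by
          have h3 : ‖w * deriv (deriv f) w / deriv f w‖
              = t * ‖q‖ := by
            rw [mul_div_assoc, ← hq, norm_mul, hwt]
          rw [h3] at hRw
          have h4 : 1 + w * deriv (deriv f) w / deriv f w = 1 + w * q := by
            rw [mul_div_assoc, ← hq]
          rw [h4] at hRw
          exact hRw
        have h5 : t * (k * ‖q‖) = k * (t * ‖q‖) := by ring
        linarith [h1, h2, h5 ▸ h1]
      have hzc : z ∈ closure (ball (0:ℂ) t) := subset_closure (mem_ball_zero_iff.mpr hzt)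
      have hnorm := Complex.norm_le_of_forall_mem_frontier_norm_le isBounded_ball
        ((hFdiff.mono hsub).diffContOnCl) hbd hzc
      rw [hF, Complex.norm_exp, Real.exp_le_one_iff,
        Complex.neg_re, neg_nonpos] at hnorm
      exact hnorm
    -- pass to the limit t → 1⁻
    set A : ℝ := (1 + (z - ζ) * deriv (deriv f) z / deriv f z).re with hA
    set B : ℝ := (ζ * (deriv (deriv f) z / deriv f z)).re with hB
    have hAB : ∀ t : ℝ, ‖z‖ < t → t < 1 → 0 ≤ A + (1 - t) * B := by
      intro t h1 h2
      have h := hstep t h1 h2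
      have hrw : 1 + (z - (t:ℂ) * ζ) * deriv (deriv f) z / deriv f z
          = (1 + (z - ζ) * deriv (deriv f) z / deriv f z)
            + (((1 - t : ℝ)) : ℂ) * (ζ * (deriv (deriv f) z / deriv f z)) := by
        rw [mul_div_assoc, mul_div_assoc]
        push_cast
        ring
      rw [hrw, Complex.add_re] at h
      rw [Complex.re_ofReal_mul] at h
      exact h
    by_contra hcon
    push_neg at hcon
    have hz1 : ‖z‖ < 1 := mem_ball_zero_iff.mp hz
    set ε : ℝ := -A with hε
    have hεpos : 0 < ε := by simp only [hε]; linarith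
    have hBpos : (0:ℝ) < |B| + 1 := by positivity
    set t1 : ℝ := max ‖z‖ (1 - ε / (2 * (|B| + 1))) with ht1def
    have ht1lt : t1 < 1 := by
      apply max_lt hz1
      have : 0 < ε / (2 * (|B| + 1)) := by positivity
      linarith
    set t' : ℝ := (t1 + 1) / 2 with ht'def
    have htt' : t1 < t' := by
      simp only [ht'def]; linarith
    have h1 : ‖z‖ < t' := lt_of_le_of_lt (le_max_left _ _) htt'
    have h2 : t' < 1 := by simp only [ht'def]; linarith
    have h3 := hAB t' h1 h2
    have h4 : 1 - t' ≤ ε / (2 * (|B| + 1)) := by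
      have h5 : 1 - ε / (2 * (|B| + 1)) ≤ t1 := le_max_right _ _
      simp only [ht'def]
      linarith
    have h6 : (1 - t') * B ≤ (1 - t') * |B| :=
      mul_le_mul_of_nonneg_left (le_abs_self B) (by linarith)
    have h7 : (1 - t') * |B| ≤ ε / 2 := by
      calc (1 - t') * |B| ≤ (ε / (2 * (|B| + 1))) * |B| :=
            mul_le_mul_of_nonneg_right h4 (abs_nonneg B)
        _ ≤ ε / 2 := by
            rw [div_mul_eq_mul_div, div_le_div_iff₀ (by positivity) (by norm_num)]
            nlinarith [abs_nonneg B, hεpos]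
    have : 0 ≤ A + ε / 2 := by linarith
    simp only [hε] at this
    linarith
end
end
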